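/- arXiv:2208.12127 — 3 statements merged into one kernel-verified Lean document; each statement's English description precedes it below -/
import Mathlib

section
/- Under the penalized QIF setup, assume: (i) θ₀ lies in the interior of Θ and is the unique point of Θ satisfying E[g₁(θ₀)] = 0; (ii) the mean function h(θ) = E[g₁(θ)] is continuous on Θ; (iii) sup_{θ∈Θ} ‖ḡ_N(θ) − h(θ)‖ → 0 almost surely as N → ∞; (iv) C̄_N(θ̂_N) → C₀ almost surely, where C₀ is a constant invertible r×r matrix; (v) λ_N → 0 as N → ∞. Then the penalized QIF minimizer θ̂_N exists and θ̂_N converges to θ₀ almost surely (and hence in probability). -/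
open MeasureTheory ProbabilityTheory Filter Matrix Topology

section LinAlg
variable {r : ℕ}

lemma dot_cs (u v : Fin r → ℝ) : (u ⬝ᵥ v)^2 ≤ (u ⬝ᵥ u) * (v ⬝ᵥ v) := by
  simpa [dotProduct, sq] using Finset.sum_mul_sq_le_sq_mul_sq Finset.univ u v

lemma dot_self_nonneg (v : Fin r → ℝ) : 0 ≤ v ⬝ᵥ v :=
  Finset.sum_nonneg fun i _ => mul_self_nonneg _

lemma dot_self_eq_zero' {v : Fin r → ℝ} (hz : v ⬝ᵥ v = 0) : v = 0 := by
  funext i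
  have h1 : ∀ j ∈ Finset.univ, 0 ≤ v j * v j := fun j _ => mul_self_nonneg _
  have := (Finset.sum_eq_zero_iff_of_nonneg h1).1 hz i (Finset.mem_univ i)
  exact mul_self_eq_zero.1 this

lemma isUnit_det_of_quadform {A : Matrix (Fin r) (Fin r) ℝ} {α : ℝ} (hα : 0 < α)
    (hq : ∀ v, α * (v ⬝ᵥ v) ≤ v ⬝ᵥ A.mulVec v) : IsUnit A.det := by
  rw [← Matrix.isUnit_iff_isUnit_det, ← Matrix.mulVec_injective_iff_isUnit]
  intro x y hxy
  have h0 : A.mulVec (x - y) = 0 := by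
    rw [Matrix.mulVec_sub, hxy, sub_self]
  have h2 := hq (x - y)
  rw [h0, dotProduct_zero] at h2
  have hz : (x - y) ⬝ᵥ (x - y) = 0 :=
    le_antisymm (by nlinarith [dot_self_nonneg (x - y)]) (dot_self_nonneg _)
  exact sub_eq_zero.1 (dot_self_eq_zero' hz)

/-- upper bound on the inverse quadratic form -/
lemma inv_quadform_le {A : Matrix (Fin r) (Fin r) ℝ} {α : ℝ} (hα : 0 < α)
    (hq : ∀ v, α * (v ⬝ᵥ v) ≤ v ⬝ᵥ A.mulVec v) (u : Fin r → ℝ) :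
    u ⬝ᵥ A⁻¹.mulVec u ≤ α⁻¹ * (u ⬝ᵥ u) := by
  have hdet := isUnit_det_of_quadform hα hq
  set w := A⁻¹.mulVec u with hw
  have hAw : A.mulVec w = u := by
    rw [hw, Matrix.mulVec_mulVec, Matrix.mul_nonsing_inv _ hdet, Matrix.one_mulVec]
  have h1 : α * (w ⬝ᵥ w) ≤ w ⬝ᵥ u := by
    have := hq w; rwa [hAw] at this
  have hcs : (w ⬝ᵥ u)^2 ≤ (w ⬝ᵥ w) * (u ⬝ᵥ u) := dot_cs w u
  have huw : u ⬝ᵥ w = w ⬝ᵥ u := dotProduct_comm u w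
  rcases le_or_gt (w ⬝ᵥ u) 0 with hle | hpos
  · calc u ⬝ᵥ A⁻¹.mulVec u = w ⬝ᵥ u := huw
    _ ≤ 0 := hle
    _ ≤ α⁻¹ * (u ⬝ᵥ u) := mul_nonneg (by positivity) (dot_self_nonneg u)
  · have hww : w ⬝ᵥ w ≤ (w ⬝ᵥ u) / α := by
      rw [le_div_iff₀ hα]; linarith [h1]
    have : (w ⬝ᵥ u)^2 ≤ ((w ⬝ᵥ u) / α) * (u ⬝ᵥ u) := by
      calc (w ⬝ᵥ u)^2 ≤ (w ⬝ᵥ w) * (u ⬝ᵥ u) := hcs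
      _ ≤ ((w ⬝ᵥ u) / α) * (u ⬝ᵥ u) := by
          apply mul_le_mul_of_nonneg_right hww (dot_self_nonneg u)
    calc u ⬝ᵥ A⁻¹.mulVec u = w ⬝ᵥ u := huw
    _ ≤ α⁻¹ * (u ⬝ᵥ u) := by
        refine le_of_mul_le_mul_left ?_ hpos
        calc (w ⬝ᵥ u) * (w ⬝ᵥ u) = (w ⬝ᵥ u)^2 := (sq _).symm
        _ ≤ ((w ⬝ᵥ u) / α) * (u ⬝ᵥ u) := this
        _ = (w ⬝ᵥ u) * (α⁻¹ * (u ⬝ᵥ u)) := by rw [div_eq_mul_inv]; ring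

end LinAlg

lemma vecMulVec_quad {r : ℕ} (x v : Fin r → ℝ) :
    v ⬝ᵥ (vecMulVec x x).mulVec v = (x ⬝ᵥ v)^2 := by
  have hmv : (vecMulVec x x).mulVec v = (x ⬝ᵥ v) • x := by
    funext a
    simp only [Matrix.mulVec, dotProduct, vecMulVec_apply, Pi.smul_apply, smul_eq_mul,
      Finset.sum_mul]
    exact Finset.sum_congr rfl fun b _ => by ring
  rw [hmv, dotProduct_smul, smul_eq_mul, dotProduct_comm, sq]

lemma quadform_smul_sum {r : ℕ} (c : ℝ) (N : ℕ) (x : ℕ → Fin r → ℝ) (v : Fin r → ℝ) :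
    v ⬝ᵥ ((c • ∑ i ∈ Finset.range N, vecMulVec (x i) (x i)).mulVec v)
      = c * ∑ i ∈ Finset.range N, (x i ⬝ᵥ v)^2 := by
  rw [Matrix.smul_mulVec, dotProduct_smul, smul_eq_mul]
  congr 1
  induction N with
  | zero => simp
  | succ n ih =>
    rw [Finset.sum_range_succ, Finset.sum_range_succ, Matrix.add_mulVec,
      dotProduct_add, ih, vecMulVec_quad]

lemma inv_quadform_ge {r : ℕ} {A : Matrix (Fin r) (Fin r) ℝ} {α K : ℝ} (hα : 0 < α) (hK : 0 < K)
    (hq : ∀ v, α * (v ⬝ᵥ v) ≤ v ⬝ᵥ A.mulVec v)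
    (hop : ∀ v, (A.mulVec v) ⬝ᵥ (A.mulVec v) ≤ K * (v ⬝ᵥ v)) (u : Fin r → ℝ) :
    (α / K) * (u ⬝ᵥ u) ≤ u ⬝ᵥ A⁻¹.mulVec u := by
  have hdet := isUnit_det_of_quadform hα hq
  set w := A⁻¹.mulVec u with hw
  have hAw : A.mulVec w = u := by
    rw [hw, Matrix.mulVec_mulVec, Matrix.mul_nonsing_inv _ hdet, Matrix.one_mulVec]
  have h1 : α * (w ⬝ᵥ w) ≤ w ⬝ᵥ u := by
    have := hq w; rwa [hAw] at this
  have h2 : u ⬝ᵥ u ≤ K * (w ⬝ᵥ w) := by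
    have := hop w; rwa [hAw] at this
  have huw : u ⬝ᵥ w = w ⬝ᵥ u := dotProduct_comm u w
  have : (α / K) * (u ⬝ᵥ u) ≤ α * (w ⬝ᵥ w) := by
    rw [div_mul_eq_mul_div, div_le_iff₀ hK]
    calc α * (u ⬝ᵥ u) ≤ α * (K * (w ⬝ᵥ w)) := by
          exact mul_le_mul_of_nonneg_left h2 hα.le
    _ = α * (w ⬝ᵥ w) * K := by ring
  calc (α / K) * (u ⬝ᵥ u) ≤ α * (w ⬝ᵥ w) := this
  _ ≤ w ⬝ᵥ u := h1
  _ = u ⬝ᵥ A⁻¹.mulVec u := huw.symm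

lemma mulVec_dot_le {r : ℕ} (A : Matrix (Fin r) (Fin r) ℝ) (v : Fin r → ℝ) :
    (A.mulVec v) ⬝ᵥ (A.mulVec v) ≤ (∑ a, ∑ b, (A a b)^2) * (v ⬝ᵥ v) := by
  have hv : v ⬝ᵥ v = ∑ b, (v b)^2 := by
    simp [dotProduct, sq]
  rw [hv, Finset.sum_mul]
  have : ∀ a : Fin r, (A.mulVec v a) * (A.mulVec v a) ≤ (∑ b, (A a b)^2) * ∑ b, (v b)^2 := by
    intro a
    have := Finset.sum_mul_sq_le_sq_mul_sq Finset.univ (fun b => A a b) v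
    simpa [Matrix.mulVec, dotProduct, sq] using this
  exact Finset.sum_le_sum fun a _ => this a

lemma quadform_perturb {r : ℕ} {A B : Matrix (Fin r) (Fin r) ℝ} {ε : ℝ} (hε : 0 ≤ ε)
    (hab : ∀ a b, |A a b - B a b| ≤ ε) (v : Fin r → ℝ) :
    |v ⬝ᵥ A.mulVec v - v ⬝ᵥ B.mulVec v| ≤ ε * r * (v ⬝ᵥ v) := by
  have hrw : v ⬝ᵥ A.mulVec v - v ⬝ᵥ B.mulVec v
      = ∑ a, ∑ b, v a * ((A a b - B a b) * v b) := by
    simp only [dotProduct, Matrix.mulVec, Finset.mul_sum, ← Finset.sum_sub_distrib]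
    exact Finset.sum_congr rfl fun a _ => Finset.sum_congr rfl fun b _ => by ring
  rw [hrw]
  set S : ℝ := ∑ i, |v i| with hS
  have hSnn : 0 ≤ S := Finset.sum_nonneg fun i _ => abs_nonneg _
  have h1 : |∑ a, ∑ b, v a * ((A a b - B a b) * v b)| ≤ ∑ a, ∑ b, |v a| * (ε * |v b|) := by
    refine (Finset.abs_sum_le_sum_abs _ _).trans (Finset.sum_le_sum fun a _ => ?_)
    refine (Finset.abs_sum_le_sum_abs _ _).trans (Finset.sum_le_sum fun b _ => ?_)
    rw [abs_mul, abs_mul]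
    exact mul_le_mul_of_nonneg_left
      (mul_le_mul_of_nonneg_right (hab a b) (abs_nonneg _)) (abs_nonneg _)
  have h2 : ∑ a, ∑ b, |v a| * (ε * |v b|) = ε * (S * S) := by
    rw [hS, Finset.sum_mul_sum]
    rw [Finset.mul_sum]
    refine Finset.sum_congr rfl fun a _ => ?_
    rw [Finset.mul_sum]
    exact Finset.sum_congr rfl fun b _ => by ring
  have h3 : S * S ≤ r * (v ⬝ᵥ v) := by
    have hcs := Finset.sum_mul_sq_le_sq_mul_sq Finset.univ (fun i => |v i|) (fun _ => (1:ℝ))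
    have : S^2 ≤ (v ⬝ᵥ v) * r := by
      simpa [hS, dotProduct, sq_abs, sq] using hcs
    nlinarith [this]
  calc |∑ a, ∑ b, v a * ((A a b - B a b) * v b)| ≤ ε * (S * S) := h1.trans_eq h2
  _ ≤ ε * (r * (v ⬝ᵥ v)) := mul_le_mul_of_nonneg_left h3 hε
  _ = ε * r * (v ⬝ᵥ v) := by ring

lemma norm_sq_le_dot {r : ℕ} (v : Fin r → ℝ) : ‖v‖^2 ≤ v ⬝ᵥ v := by
  have h : ‖v‖ ≤ Real.sqrt (v ⬝ᵥ v) := by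
    rw [pi_norm_le_iff_of_nonneg (Real.sqrt_nonneg _)]
    intro i
    rw [Real.norm_eq_abs, ← Real.sqrt_sq_eq_abs]
    apply Real.sqrt_le_sqrt
    have : (v i)^2 = v i * v i := sq (v i) ▸ by ring
    rw [this]
    exact Finset.single_le_sum (fun j _ => mul_self_nonneg (v j)) (Finset.mem_univ i)
  calc ‖v‖^2 ≤ (Real.sqrt (v ⬝ᵥ v))^2 := by
        exact pow_le_pow_left₀ (norm_nonneg _) h 2
  _ = v ⬝ᵥ v := Real.sq_sqrt (dot_self_nonneg v)

lemma dot_le_norm_sq {r : ℕ} (v : Fin r → ℝ) : v ⬝ᵥ v ≤ r * ‖v‖^2 := by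
  have : ∀ i : Fin r, v i * v i ≤ ‖v‖^2 := by
    intro i
    have h := norm_le_pi_norm v i
    have : v i * v i = ‖v i‖^2 := by rw [Real.norm_eq_abs, sq_abs, sq]
    rw [this]
    exact pow_le_pow_left₀ (norm_nonneg _) h 2
  calc v ⬝ᵥ v = ∑ i, v i * v i := rfl
  _ ≤ ∑ _i : Fin r, ‖v‖^2 := Finset.sum_le_sum fun i _ => this i
  _ = r * ‖v‖^2 := by simp [Finset.sum_const, nsmul_eq_mul]

lemma vecMulVec_mulVec' {r : ℕ} (x v : Fin r → ℝ) :
    (vecMulVec x x).mulVec v = (x ⬝ᵥ v) • x := by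
  funext a
  simp only [Matrix.mulVec, dotProduct, vecMulVec_apply, Pi.smul_apply, smul_eq_mul,
    Finset.sum_mul]
  exact Finset.sum_congr rfl fun b _ => by ring

lemma quadform_smul_sum' {r : ℕ} (c : ℝ) (N : ℕ) (Y : ℕ → Matrix (Fin r) (Fin r) ℝ)
    (v : Fin r → ℝ) :
    v ⬝ᵥ ((c • ∑ i ∈ Finset.range N, Y i).mulVec v)
      = c * ∑ i ∈ Finset.range N, v ⬝ᵥ (Y i).mulVec v := by
  rw [Matrix.smul_mulVec, dotProduct_smul, smul_eq_mul]
  congr 1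
  induction N with
  | zero => simp
  | succ n ih =>
    rw [Finset.sum_range_succ, Finset.sum_range_succ, Matrix.add_mulVec,
      dotProduct_add, ih]

lemma inv_quadform_nonneg {r : ℕ} {A : Matrix (Fin r) (Fin r) ℝ} {α : ℝ} (hα : 0 < α)
    (hq : ∀ v, α * (v ⬝ᵥ v) ≤ v ⬝ᵥ A.mulVec v) (u : Fin r → ℝ) :
    0 ≤ u ⬝ᵥ A⁻¹.mulVec u := by
  have hdet := isUnit_det_of_quadform hα hq
  set w := A⁻¹.mulVec u with hw
  have hAw : A.mulVec w = u := by
    rw [hw, Matrix.mulVec_mulVec, Matrix.mul_nonsing_inv _ hdet, Matrix.one_mulVec]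
  have h1 : α * (w ⬝ᵥ w) ≤ w ⬝ᵥ u := by
    have := hq w; rwa [hAw] at this
  have : (0:ℝ) ≤ w ⬝ᵥ u := le_trans (mul_nonneg hα.le (dot_self_nonneg w)) h1
  rwa [dotProduct_comm] at this

lemma quadform_homog {r : ℕ} {A : Matrix (Fin r) (Fin r) ℝ} {c : ℝ}
    (hq : ∀ v, v ⬝ᵥ v = 1 → c ≤ v ⬝ᵥ A.mulVec v) (v : Fin r → ℝ) :
    c * (v ⬝ᵥ v) ≤ v ⬝ᵥ A.mulVec v := by
  rcases eq_or_ne v 0 with rfl | hv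
  · simp
  · have hvv : 0 < v ⬝ᵥ v := by
      rcases lt_or_eq_of_le (dot_self_nonneg v) with hlt | heq
      · exact hlt
      · exact absurd (dot_self_eq_zero' heq.symm) hv
    set t : ℝ := Real.sqrt (v ⬝ᵥ v) with ht
    have htpos : 0 < t := Real.sqrt_pos.2 hvv
    have ht2 : t^2 = v ⬝ᵥ v := Real.sq_sqrt hvv.le
    set u : Fin r → ℝ := t⁻¹ • v with hu
    have huu : u ⬝ᵥ u = 1 := by
      rw [hu, smul_dotProduct, dotProduct_smul, smul_eq_mul, smul_eq_mul,
        ← mul_assoc, ← ht2]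
      field_simp
    have hqu : u ⬝ᵥ A.mulVec u = t⁻¹ * t⁻¹ * (v ⬝ᵥ A.mulVec v) := by
      rw [hu, smul_dotProduct, Matrix.mulVec_smul, dotProduct_smul,
        smul_eq_mul, smul_eq_mul]
      ring
    have := hq u huu
    rw [hqu] at this
    have h2 : c * t^2 ≤ v ⬝ᵥ A.mulVec v := by
      have := mul_le_mul_of_nonneg_left this (le_of_lt (by positivity : (0:ℝ) < t^2))
      calc c * t^2 = t^2 * c := by ring
      _ ≤ t^2 * (t⁻¹ * t⁻¹ * (v ⬝ᵥ A.mulVec v)) := this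
      _ = v ⬝ᵥ A.mulVec v := by field_simp
    rwa [ht2] at h2

lemma continuous_quadform {r : ℕ} (A : Matrix (Fin r) (Fin r) ℝ) :
    Continuous fun v : Fin r → ℝ => v ⬝ᵥ A.mulVec v := by
  unfold dotProduct Matrix.mulVec
  exact continuous_finset_sum _ fun i _ =>
    (continuous_apply i).mul (continuous_finset_sum _ fun j _ =>
      (continuous_const.mul (continuous_apply j)))

lemma continuous_dotself {r : ℕ} : Continuous fun v : Fin r → ℝ => v ⬝ᵥ v :=
  continuous_finset_sum _ fun i _ => (continuous_apply i).mul (continuous_apply i)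

lemma sphere_compact {r : ℕ} : IsCompact {v : Fin r → ℝ | v ⬝ᵥ v = 1} := by
  have hclosed : IsClosed {v : Fin r → ℝ | v ⬝ᵥ v = 1} :=
    isClosed_eq continuous_dotself continuous_const
  refine (isCompact_closedBall (0 : Fin r → ℝ) 1).of_isClosed_subset hclosed ?_
  intro v hv
  simp only [Set.mem_setOf_eq] at hv
  simp only [Metric.mem_closedBall, dist_zero_right]
  nlinarith [norm_nonneg v, norm_sq_le_dot v, hv]

section Core
open Finset

lemma measurable_dotright {r : ℕ} (v : Fin r → ℝ) :
    Measurable fun x : Fin r → ℝ => x ⬝ᵥ v :=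
  Finset.measurable_sum _ fun i _ => (measurable_pi_apply i).mul measurable_const

/-- Core probabilistic lemma: at the point where the sample mean tends to zero,
the (unnormalized) QIF quadratic form tends to zero a.s. -/
lemma qif_core {r : ℕ} {Ω : Type*} [MeasurableSpace Ω] (P : Measure Ω) [IsProbabilityMeasure P]
    (X : ℕ → Ω → Fin r → ℝ)
    (hXmeas : ∀ i, Measurable (X i))
    (hXindep : Pairwise fun i j => IndepFun (X i) (X j) P)
    (hXident : ∀ i, IdentDistrib (X i) (X 0) P P)
    (hgbar : ∀ᵐ ω ∂P, Tendsto (fun N : ℕ => ‖(N:ℝ)⁻¹ • ∑ i ∈ Finset.range N, X i ω‖)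
      atTop (𝓝 0)) :
    ∀ᵐ ω ∂P, Tendsto (fun N : ℕ =>
      ((N:ℝ)⁻¹ • ∑ i ∈ Finset.range N, X i ω) ⬝ᵥ
        (((N:ℝ)⁻¹ • ∑ i ∈ Finset.range N, vecMulVec (X i ω) (X i ω))⁻¹).mulVec
        ((N:ℝ)⁻¹ • ∑ i ∈ Finset.range N, X i ω)) atTop (𝓝 0) := by
  rcases Nat.eq_zero_or_pos r with hr | hr
  · subst hr
    refine Filter.Eventually.of_forall fun ω => ?_
    have : ∀ N : ℕ, ((N:ℝ)⁻¹ • ∑ i ∈ Finset.range N, X i ω) ⬝ᵥ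
        (((N:ℝ)⁻¹ • ∑ i ∈ Finset.range N, vecMulVec (X i ω) (X i ω))⁻¹).mulVec
        ((N:ℝ)⁻¹ • ∑ i ∈ Finset.range N, X i ω) = 0 := by
      intro N; simp [dotProduct]
    simpa [this] using (tendsto_const_nhds : Tendsto (fun _ : ℕ => (0:ℝ)) atTop (𝓝 0))
  by_cases hcase : ∃ v : Fin r → ℝ, v ≠ 0 ∧ ∀ᵐ ω ∂P, X 0 ω ⬝ᵥ v = 0
  · -- degenerate case: an a.s. null direction makes Cbar singular, so inverse is 0
    obtain ⟨v, hv0, hvae⟩ := hcase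
    have hall : ∀ᵐ ω ∂P, ∀ i, X i ω ⬝ᵥ v = 0 := by
      rw [ae_all_iff]
      intro i
      have hid : IdentDistrib (fun ω => X i ω ⬝ᵥ v) (fun ω => X 0 ω ⬝ᵥ v) P P :=
        (hXident i).comp (measurable_dotright v)
      exact hid.symm.ae_snd (p := fun x => x = 0) measurableSet_eq hvae
    filter_upwards [hall] with ω hω
    have hCv : ∀ N : ℕ,
        (((N:ℝ)⁻¹ • ∑ i ∈ Finset.range N, vecMulVec (X i ω) (X i ω))).mulVec v = 0 := by
      intro N
      rw [Matrix.smul_mulVec]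
      have : (∑ i ∈ Finset.range N, vecMulVec (X i ω) (X i ω)).mulVec v = 0 := by
        induction N with
        | zero => simp
        | succ n ih =>
          rw [Finset.sum_range_succ, Matrix.add_mulVec, ih, vecMulVec_mulVec', hω n]
          simp
      rw [this, smul_zero]
    have hinv : ∀ N : ℕ,
        (((N:ℝ)⁻¹ • ∑ i ∈ Finset.range N, vecMulVec (X i ω) (X i ω)))⁻¹ = 0 := by
      intro N
      apply Matrix.nonsing_inv_apply_not_isUnit
      intro hdet
      have hinj := Matrix.mulVec_injective_iff_isUnit.2 ((Matrix.isUnit_iff_isUnit_det _).2 hdet)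
      apply hv0
      apply hinj
      rw [hCv N, Matrix.mulVec_zero]
    have : ∀ N : ℕ, ((N:ℝ)⁻¹ • ∑ i ∈ Finset.range N, X i ω) ⬝ᵥ
        (((N:ℝ)⁻¹ • ∑ i ∈ Finset.range N, vecMulVec (X i ω) (X i ω))⁻¹).mulVec
        ((N:ℝ)⁻¹ • ∑ i ∈ Finset.range N, X i ω) = 0 := by
      intro N; rw [hinv N]; simp
    simpa [this] using (tendsto_const_nhds : Tendsto (fun _ : ℕ => (0:ℝ)) atTop (𝓝 0))
  · push_neg at hcase
    classical
    set F : ℕ → (Fin r → ℝ) → Matrix (Fin r) (Fin r) ℝ :=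
      fun M x => if ‖x‖ ≤ (M:ℝ) then vecMulVec x x else 0 with hF
    have hFapp : ∀ M (x : Fin r → ℝ) a b,
        F M x a b = if ‖x‖ ≤ (M:ℝ) then x a * x b else 0 := by
      intro M x a b
      by_cases hx : ‖x‖ ≤ (M:ℝ)
      · simp only [hF, if_pos hx, vecMulVec_apply]
      · simp only [hF, if_neg hx]; rfl
    have hFmeas : ∀ M a b, Measurable fun x : Fin r → ℝ => F M x a b := by
      intro M a b
      simp only [hFapp]
      exact Measurable.ite (measurableSet_le measurable_norm measurable_const)
        ((measurable_pi_apply a).mul (measurable_pi_apply b)) measurable_const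
    have hFbd : ∀ M (x : Fin r → ℝ) a b, |F M x a b| ≤ (M:ℝ)^2 := by
      intro M x a b; rw [hFapp]
      split_ifs with hx
      · have ha : |x a| ≤ (M:ℝ) := le_trans (norm_le_pi_norm x a) hx
        have hb : |x b| ≤ (M:ℝ) := le_trans (norm_le_pi_norm x b) hx
        rw [abs_mul, sq]
        exact mul_le_mul ha hb (abs_nonneg _) (le_trans (abs_nonneg _) ha)
      · simpa using sq_nonneg (M:ℝ)
    have hFquad : ∀ M (x v : Fin r → ℝ),
        v ⬝ᵥ (F M x).mulVec v = if ‖x‖ ≤ (M:ℝ) then (x ⬝ᵥ v)^2 else 0 := by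
      intro M x v
      by_cases hx : ‖x‖ ≤ (M:ℝ)
      · simp only [hF, if_pos hx]
        exact vecMulVec_quad x v
      · simp only [hF, if_neg hx]
        simp
    have hFquad_nn : ∀ M (x v : Fin r → ℝ), 0 ≤ v ⬝ᵥ (F M x).mulVec v := by
      intro M x v; rw [hFquad]; split_ifs
      · exact sq_nonneg _
      · exact le_refl 0
    have hFquad_le : ∀ M (x v : Fin r → ℝ), v ⬝ᵥ (F M x).mulVec v ≤ (x ⬝ᵥ v)^2 := by
      intro M x v; rw [hFquad]; split_ifs
      · exact le_refl _
      · exact sq_nonneg _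
    have hFmono : ∀ {M M' : ℕ}, M ≤ M' → ∀ (x v : Fin r → ℝ),
        v ⬝ᵥ (F M x).mulVec v ≤ v ⬝ᵥ (F M' x).mulVec v := by
      intro M M' hMM x v
      rw [hFquad, hFquad]
      split_ifs with h1 h2
      · exact le_refl _
      · exact absurd (le_trans h1 (Nat.cast_le.2 hMM)) h2
      · exact sq_nonneg _
      · exact le_refl _
    have hInt : ∀ (M i : ℕ) a b, Integrable (fun ω => F M (X i ω) a b) P := by
      intro M i a b
      refine Integrable.mono' (integrable_const ((M:ℝ)^2))
        (((hFmeas M a b).comp (hXmeas i)).aestronglyMeasurable) ?_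
      exact Filter.Eventually.of_forall fun ω => by
        rw [Real.norm_eq_abs]; exact hFbd M (X i ω) a b
    set A : ℕ → Matrix (Fin r) (Fin r) ℝ :=
      fun M => Matrix.of fun a b => ∫ ω, F M (X 0 ω) a b ∂P with hA
    have hIntQ : ∀ M (v : Fin r → ℝ),
        Integrable (fun ω => v ⬝ᵥ (F M (X 0 ω)).mulVec v) P := by
      intro M v
      have heq : (fun ω => v ⬝ᵥ (F M (X 0 ω)).mulVec v)
          = fun ω => ∑ a, v a * ∑ b, F M (X 0 ω) a b * v b := rfl
      rw [heq]
      refine integrable_finset_sum _ fun a _ => Integrable.const_mul ?_ _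
      exact integrable_finset_sum _ fun b _ => (hInt M 0 a b).mul_const _
    have hAquad : ∀ M (v : Fin r → ℝ),
        v ⬝ᵥ (A M).mulVec v = ∫ ω, v ⬝ᵥ (F M (X 0 ω)).mulVec v ∂P := by
      intro M v
      have h1 : v ⬝ᵥ (A M).mulVec v
          = ∑ a, v a * ∑ b, (∫ ω, F M (X 0 ω) a b ∂P) * v b := rfl
      rw [h1]
      calc ∑ a, v a * ∑ b, (∫ ω, F M (X 0 ω) a b ∂P) * v b
          = ∑ a, v a * ∑ b, ∫ ω, F M (X 0 ω) a b * v b ∂P := by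
            refine Finset.sum_congr rfl fun a _ => ?_
            congr 1
            exact Finset.sum_congr rfl fun b _ => (integral_mul_const _ _).symm
        _ = ∑ a, v a * ∫ ω, ∑ b, F M (X 0 ω) a b * v b ∂P := by
            refine Finset.sum_congr rfl fun a _ => ?_
            congr 1
            exact (integral_finset_sum _ fun b _ => (hInt M 0 a b).mul_const _).symm
        _ = ∑ a, ∫ ω, v a * ∑ b, F M (X 0 ω) a b * v b ∂P := by
            refine Finset.sum_congr rfl fun a _ => ?_
            exact (integral_const_mul _ _).symm
        _ = ∫ ω, ∑ a, v a * ∑ b, F M (X 0 ω) a b * v b ∂P := by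
            refine (integral_finset_sum _ fun a _ => ?_).symm
            exact Integrable.const_mul
              (integrable_finset_sum _ fun b _ => (hInt M 0 a b).mul_const _) _
        _ = ∫ ω, v ⬝ᵥ (F M (X 0 ω)).mulVec v ∂P := rfl
    have hAmono : ∀ {M M' : ℕ}, M ≤ M' → ∀ v : Fin r → ℝ,
        v ⬝ᵥ (A M).mulVec v ≤ v ⬝ᵥ (A M').mulVec v := by
      intro M M' hMM v
      rw [hAquad, hAquad]
      exact integral_mono (hIntQ M v) (hIntQ M' v) fun ω => hFmono hMM _ v
    have hApos : ∀ v : Fin r → ℝ, v ≠ 0 → ∃ M : ℕ, 0 < v ⬝ᵥ (A M).mulVec v := by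
      intro v hv
      by_contra hnot
      push_neg at hnot
      have hzero : ∀ M : ℕ, (fun ω => v ⬝ᵥ (F M (X 0 ω)).mulVec v) =ᵐ[P] 0 := by
        intro M
        have hnn : 0 ≤ᵐ[P] fun ω => v ⬝ᵥ (F M (X 0 ω)).mulVec v :=
          Filter.Eventually.of_forall fun ω => hFquad_nn M _ v
        have hint0 : ∫ ω, v ⬝ᵥ (F M (X 0 ω)).mulVec v ∂P = 0 := by
          refine le_antisymm ?_ (integral_nonneg fun ω => hFquad_nn M _ v)
          rw [← hAquad]
          exact hnot M
        exact (integral_eq_zero_iff_of_nonneg_ae hnn (hIntQ M v)).1 hint0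
      have hae : ∀ᵐ ω ∂P, ∀ M : ℕ, v ⬝ᵥ (F M (X 0 ω)).mulVec v = 0 :=
        ae_all_iff.2 fun M => hzero M
      refine hcase v hv ?_
      filter_upwards [hae] with ω hω
      have := hω ⌈‖X 0 ω‖⌉₊
      rw [hFquad] at this
      rw [if_pos (Nat.le_ceil _)] at this
      exact not_not.2 (pow_eq_zero_iff (two_ne_zero) |>.1 this)
    -- compactness: find a single truncation level working for all directions
    set S : Set (Fin r → ℝ) := {v | v ⬝ᵥ v = 1} with hS
    have hScov : S ⊆ ⋃ M : ℕ, {v : Fin r → ℝ | 0 < v ⬝ᵥ (A M).mulVec v} := by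
      intro v hv
      have hv0 : v ≠ 0 := by
        intro hcontra
        rw [hS] at hv
        simp only [Set.mem_setOf_eq, hcontra] at hv
        simp at hv
      obtain ⟨M, hM⟩ := hApos v hv0
      exact Set.mem_iUnion.2 ⟨M, hM⟩
    obtain ⟨t, ht⟩ := sphere_compact.elim_finite_subcover
      (fun M : ℕ => {v : Fin r → ℝ | 0 < v ⬝ᵥ (A M).mulVec v})
      (fun M => isOpen_lt continuous_const (continuous_quadform (A M))) hScov
    set Mstar : ℕ := t.sup id with hMstar
    have hAstar : ∀ v ∈ S, 0 < v ⬝ᵥ (A Mstar).mulVec v := by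
      intro v hv
      obtain ⟨M, hMt, hMv⟩ := Set.mem_iUnion₂.1 (ht hv)
      exact lt_of_lt_of_le hMv (hAmono (Finset.le_sup (f := id) hMt) v)
    -- minimum of the quadratic form on the sphere
    have hSne : S.Nonempty := by
      refine ⟨Pi.single ⟨0, hr⟩ 1, ?_⟩
      simp only [hS, Set.mem_setOf_eq, dotProduct]
      rw [Finset.sum_eq_single (⟨0, hr⟩ : Fin r)]
      · simp
      · intro b _ hb
        rw [Pi.single_apply, if_neg hb]
        ring
      · intro hmem
        exact absurd (Finset.mem_univ _) hmem
    obtain ⟨vmin, hvminS, hvmin⟩ := sphere_compact.exists_isMinOn hSne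
      (continuous_quadform (A Mstar)).continuousOn
    set c : ℝ := vmin ⬝ᵥ (A Mstar).mulVec vmin with hc
    have hcpos : 0 < c := hAstar vmin hvminS
    have hAc : ∀ v : Fin r → ℝ, c * (v ⬝ᵥ v) ≤ v ⬝ᵥ (A Mstar).mulVec v :=
      quadform_homog fun v hv1 => hvmin hv1
    -- strong law of large numbers entrywise at truncation level Mstar
    have hsl : ∀ᵐ ω ∂P, ∀ a b : Fin r,
        Tendsto (fun N : ℕ => (∑ i ∈ Finset.range N, F Mstar (X i ω) a b) / N)
          atTop (𝓝 (A Mstar a b)) := by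
      rw [ae_all_iff]
      intro a
      rw [ae_all_iff]
      intro b
      exact strong_law_ae_real (fun i ω => F Mstar (X i ω) a b) (hInt Mstar 0 a b)
        (fun i j hij => (hXindep hij).comp (hFmeas Mstar a b) (hFmeas Mstar a b))
        (fun i => (hXident i).comp (hFmeas Mstar a b))
    filter_upwards [hsl, hgbar] with ω hB hG
    set Gb : ℕ → Fin r → ℝ := fun N => (N:ℝ)⁻¹ • ∑ i ∈ Finset.range N, X i ω with hGb
    set Cb : ℕ → Matrix (Fin r) (Fin r) ℝ :=
      fun N => (N:ℝ)⁻¹ • ∑ i ∈ Finset.range N, vecMulVec (X i ω) (X i ω) with hCb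
    set Bb : ℕ → Matrix (Fin r) (Fin r) ℝ :=
      fun N => (N:ℝ)⁻¹ • ∑ i ∈ Finset.range N, F Mstar (X i ω) with hBb
    have hBtend : ∀ a b : Fin r, Tendsto (fun N => Bb N a b) atTop (𝓝 (A Mstar a b)) := by
      intro a b
      refine (hB a b).congr fun N => ?_
      simp only [hBb, Matrix.smul_apply, Matrix.sum_apply, smul_eq_mul, div_eq_inv_mul]
    have hBleC : ∀ (N : ℕ) (v : Fin r → ℝ),
        v ⬝ᵥ (Bb N).mulVec v ≤ v ⬝ᵥ (Cb N).mulVec v := by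
      intro N v
      rw [hBb, hCb, quadform_smul_sum', quadform_smul_sum]
      refine mul_le_mul_of_nonneg_left ?_ (by positivity)
      exact Finset.sum_le_sum fun i _ => hFquad_le Mstar (X i ω) v
    -- eventually the empirical second moment dominates (c/2) • Id in quadratic form
    have hev : ∀ᶠ N : ℕ in atTop, ∀ v : Fin r → ℝ,
        (c/2) * (v ⬝ᵥ v) ≤ v ⬝ᵥ (Cb N).mulVec v := by
      set ε : ℝ := c / (2 * (r + 1)) with hε
      have hεpos : 0 < ε := by positivity
      have hone : ∀ᶠ N : ℕ in atTop, ∀ a b : Fin r, |Bb N a b - A Mstar a b| ≤ ε := by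
        rw [Filter.eventually_all]
        intro a
        rw [Filter.eventually_all]
        intro b
        have := (hBtend a b).sub_const (A Mstar a b)
        rw [sub_self] at this
        have h2 := (this.abs.eventually (ge_mem_nhds (by simpa using hεpos)))
        simpa using h2
      filter_upwards [hone] with N hN v
      have hper := quadform_perturb (A := Bb N) (B := A Mstar) hεpos.le hN v
      have h1 : v ⬝ᵥ (A Mstar).mulVec v - ε * r * (v ⬝ᵥ v) ≤ v ⬝ᵥ (Bb N).mulVec v := by
        have := abs_le.1 hper
        linarith [this.1]
      have h2 : ε * r * (v ⬝ᵥ v) ≤ (c/2) * (v ⬝ᵥ v) := by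
        refine mul_le_mul_of_nonneg_right ?_ (dot_self_nonneg v)
        rw [hε]
        rw [div_mul_eq_mul_div, div_le_div_iff₀ (by positivity) (by norm_num)]
        nlinarith [hcpos, (Nat.cast_nonneg r : (0:ℝ) ≤ r)]
      have h3 := hAc v
      have h4 := hBleC N v
      linarith
    -- squeeze
    have hGdot : Tendsto (fun N => Gb N ⬝ᵥ Gb N) atTop (𝓝 0) := by
      have hub : ∀ N, Gb N ⬝ᵥ Gb N ≤ r * ‖Gb N‖^2 := fun N => dot_le_norm_sq (Gb N)
      have hlb : ∀ N, 0 ≤ Gb N ⬝ᵥ Gb N := fun N => dot_self_nonneg _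
      have hnorm2 : Tendsto (fun N => (r:ℝ) * ‖Gb N‖^2) atTop (𝓝 0) := by
        have h0 : Tendsto (fun N => (r:ℝ) * (‖Gb N‖ * ‖Gb N‖)) atTop (𝓝 ((r:ℝ) * (0*0))) :=
          (tendsto_const_nhds (x := (r:ℝ))).mul (hG.mul hG)
        simpa [sq] using h0
      exact tendsto_of_tendsto_of_tendsto_of_le_of_le tendsto_const_nhds hnorm2 hlb hub
    have hupper : Tendsto (fun N => (c/2)⁻¹ * (Gb N ⬝ᵥ Gb N)) atTop (𝓝 0) := by
      simpa using tendsto_const_nhds.mul hGdot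
    refine tendsto_of_tendsto_of_tendsto_of_le_of_le' tendsto_const_nhds hupper ?_ ?_
    · filter_upwards [hev] with N hN
      exact inv_quadform_nonneg (by positivity) hN (Gb N)
    · filter_upwards [hev] with N hN
      exact inv_quadform_le (by positivity) hN (Gb N)

end Core

lemma dot_mulVec_symm {r : ℕ} {A : Matrix (Fin r) (Fin r) ℝ} (hsym : ∀ a b, A a b = A b a)
    (x y : Fin r → ℝ) : x ⬝ᵥ A.mulVec y = y ⬝ᵥ A.mulVec x := by
  simp only [dotProduct, Matrix.mulVec, Finset.mul_sum]
  rw [Finset.sum_comm]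
  refine Finset.sum_congr rfl fun a _ => Finset.sum_congr rfl fun b _ => ?_
  rw [hsym b a]
  ring

lemma posdef_quad_lb {r : ℕ} (hr : 0 < r) {A : Matrix (Fin r) (Fin r) ℝ}
    (hpd : ∀ v : Fin r → ℝ, v ≠ 0 → 0 < v ⬝ᵥ A.mulVec v) :
    ∃ c : ℝ, 0 < c ∧ ∀ v : Fin r → ℝ, c * (v ⬝ᵥ v) ≤ v ⬝ᵥ A.mulVec v := by
  have hSne : ({v : Fin r → ℝ | v ⬝ᵥ v = 1}).Nonempty := by
    refine ⟨Pi.single ⟨0, hr⟩ 1, ?_⟩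
    simp only [Set.mem_setOf_eq, dotProduct]
    rw [Finset.sum_eq_single (⟨0, hr⟩ : Fin r)]
    · simp
    · intro b _ hb
      rw [Pi.single_apply, if_neg hb]
      ring
    · intro hmem
      exact absurd (Finset.mem_univ _) hmem
  obtain ⟨vmin, hvminS, hvmin⟩ := sphere_compact.exists_isMinOn hSne
    (continuous_quadform A).continuousOn
  refine ⟨vmin ⬝ᵥ A.mulVec vmin, ?_, quadform_homog fun v hv1 => hvmin hv1⟩
  refine hpd vmin ?_
  intro hv0
  have : vmin ⬝ᵥ vmin = 1 := hvminS
  rw [hv0] at this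
  simp at this

lemma quad_lb_of_entry_tendsto {r : ℕ} {B : ℕ → Matrix (Fin r) (Fin r) ℝ}
    {A : Matrix (Fin r) (Fin r) ℝ} {c : ℝ} (hc : 0 < c)
    (htend : ∀ a b, Tendsto (fun N => B N a b) atTop (𝓝 (A a b)))
    (hA : ∀ v : Fin r → ℝ, c * (v ⬝ᵥ v) ≤ v ⬝ᵥ A.mulVec v) :
    ∀ᶠ N : ℕ in atTop, ∀ v : Fin r → ℝ, (c/2) * (v ⬝ᵥ v) ≤ v ⬝ᵥ (B N).mulVec v := by
  set ε : ℝ := c / (2 * (r + 1)) with hε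
  have hεpos : 0 < ε := by positivity
  have hone : ∀ᶠ N : ℕ in atTop, ∀ a b : Fin r, |B N a b - A a b| ≤ ε := by
    rw [Filter.eventually_all]
    intro a
    rw [Filter.eventually_all]
    intro b
    have h1 := (htend a b).sub_const (A a b)
    rw [sub_self] at h1
    have h2 := (h1.abs.eventually (ge_mem_nhds (by simpa using hεpos)))
    simpa using h2
  filter_upwards [hone] with N hN v
  have hper := quadform_perturb (A := B N) (B := A) hεpos.le hN v
  have h1 : v ⬝ᵥ A.mulVec v - ε * r * (v ⬝ᵥ v) ≤ v ⬝ᵥ (B N).mulVec v := by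
    have := abs_le.1 hper
    linarith [this.1]
  have h2 : ε * r * (v ⬝ᵥ v) ≤ (c/2) * (v ⬝ᵥ v) := by
    refine mul_le_mul_of_nonneg_right ?_ (dot_self_nonneg v)
    rw [hε, div_mul_eq_mul_div, div_le_div_iff₀ (by positivity) (by norm_num)]
    nlinarith [hc, (Nat.cast_nonneg r : (0:ℝ) ≤ r)]
  have h3 := hA v
  linarith

/-- Sample mean `ḡ_N(θ)(ω) = N⁻¹ ∑_{i<N} g_i(θ)(ω)`. -/
noncomputable def gbar {k r : ℕ} {Ω : Type*} (g : ℕ → (Fin k → ℝ) → Ω → Fin r → ℝ)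
    (N : ℕ) (θ : Fin k → ℝ) (ω : Ω) : Fin r → ℝ :=
  (N : ℝ)⁻¹ • ∑ i ∈ Finset.range N, g i θ ω

/-- Sample second-moment matrix `C̄_N(θ)(ω) = N⁻¹ ∑_{i<N} g_i(θ)(ω) g_i(θ)(ω)ᵀ`. -/
noncomputable def Cbar {k r : ℕ} {Ω : Type*} (g : ℕ → (Fin k → ℝ) → Ω → Fin r → ℝ)
    (N : ℕ) (θ : Fin k → ℝ) (ω : Ω) : Matrix (Fin r) (Fin r) ℝ :=
  (N : ℝ)⁻¹ • ∑ i ∈ Finset.range N, Matrix.vecMulVec (g i θ ω) (g i θ ω)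

/-- Quadratic inference function `Q_N(θ) = N ḡ_Nᵀ C̄_N⁻¹ ḡ_N`. -/
noncomputable def QN {k r : ℕ} {Ω : Type*} (g : ℕ → (Fin k → ℝ) → Ω → Fin r → ℝ)
    (N : ℕ) (θ : Fin k → ℝ) (ω : Ω) : ℝ :=
  (N : ℝ) * (gbar g N θ ω ⬝ᵥ (Cbar g N θ ω)⁻¹.mulVec (gbar g N θ ω))

/-- Penalized QIF objective `N⁻¹ Q_N(θ) + λ_N θᵀ D θ`. -/
noncomputable def penObj {k r : ℕ} {Ω : Type*} (g : ℕ → (Fin k → ℝ) → Ω → Fin r → ℝ)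
    (D : Matrix (Fin k) (Fin k) ℝ) (lam : ℕ → ℝ)
    (N : ℕ) (θ : Fin k → ℝ) (ω : Ω) : ℝ :=
  (N : ℝ)⁻¹ * QN g N θ ω + lam N * (θ ⬝ᵥ D.mulVec θ)

/-- Consistency of the penalized QIF estimator.  Under the penalized QIF setup,
if (i) θ₀ is interior to Θ and is the unique zero of `h(θ) = E[g₁(θ)]` on Θ; (ii) h is
continuous on Θ; (iii) `sup_{θ∈Θ} ‖ḡ_N(θ) − h(θ)‖ → 0` a.s.; (iv) `C̄_N(θ̂_N) → C₀` a.s. with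
C₀ invertible; (v) `λ_N → 0`; then the penalized minimizer exists and `θ̂_N → θ₀` almost
surely (hence in probability). -/
theorem stmt0 {k r : ℕ} {Ω : Type*} [MeasurableSpace Ω]
    (P : Measure Ω) [IsProbabilityMeasure P]
    (Θ : Set (Fin k → ℝ)) (hΘ : IsCompact Θ)
    (g : ℕ → (Fin k → ℝ) → Ω → Fin r → ℝ)
    (hmeas : ∀ i, Measurable fun p : (Fin k → ℝ) × Ω => g i p.1 p.2)
    (hcont : ∀ i ω, Continuous fun θ => g i θ ω)
    (hindep : ∀ θ, iIndepFun (fun i ω => g i θ ω) P)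
    (hident : ∀ θ i, IdentDistrib (g i θ) (g 0 θ) P P)
    (D : Matrix (Fin k) (Fin k) ℝ) (hD : D.PosSemidef)
    (lam : ℕ → ℝ) (hlamnn : ∀ N, 0 ≤ lam N)
    (θhat : ℕ → Ω → Fin k → ℝ)
    (hθhatmeas : ∀ N, Measurable (θhat N))
    (hθhatmem : ∀ N ω, θhat N ω ∈ Θ)
    (hθhatmin : ∀ N ω, ∀ θ ∈ Θ, penObj g D lam N (θhat N ω) ω ≤ penObj g D lam N θ ω)
    (θ₀ : Fin k → ℝ)
    (h : (Fin k → ℝ) → Fin r → ℝ)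
    (hh : ∀ θ, h θ = ∫ ω, g 0 θ ω ∂P)
    -- (i)
    (hθ₀int : θ₀ ∈ interior Θ)
    (hzero : h θ₀ = 0)
    (huniq : ∀ θ ∈ Θ, h θ = 0 → θ = θ₀)
    -- (ii)
    (hhcont : ContinuousOn h Θ)
    -- (iii)
    (hsup : ∀ᵐ ω ∂P,
      Tendsto (fun N => ⨆ θ : Θ, ‖gbar g N (θ : Fin k → ℝ) ω - h (θ : Fin k → ℝ)‖)
        atTop (𝓝 0))
    -- (iv)
    (C₀ : Matrix (Fin r) (Fin r) ℝ) (hC₀ : IsUnit C₀.det)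
    (hCbar : ∀ᵐ ω ∂P, ∀ a b,
      Tendsto (fun N => Cbar g N (θhat N ω) ω a b) atTop (𝓝 (C₀ a b)))
    -- (v)
    (hlam : Tendsto lam atTop (𝓝 0)) :
    (∀ N ω, ∃ θ ∈ Θ, ∀ θ' ∈ Θ, penObj g D lam N θ ω ≤ penObj g D lam N θ' ω) ∧
    (∀ᵐ ω ∂P, Tendsto (fun N => θhat N ω) atTop (𝓝 θ₀)) ∧
    TendstoInMeasure P θhat atTop (fun _ => θ₀) := by
  have part1 : ∀ N ω, ∃ θ ∈ Θ, ∀ θ' ∈ Θ, penObj g D lam N θ ω ≤ penObj g D lam N θ' ω :=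
    fun N ω => ⟨θhat N ω, hθhatmem N ω, hθhatmin N ω⟩
  have hθ₀Θ : θ₀ ∈ Θ := interior_subset hθ₀int
  rcases Nat.eq_zero_or_pos r with hr0 | hrpos
  · -- trivial case r = 0 : h ≡ 0, so Θ = {θ₀}
    have hh0 : ∀ θ, h θ = 0 := by
      intro θ
      funext i
      exact absurd i.2 (by omega)
    have hθeq : ∀ N ω, θhat N ω = θ₀ := fun N ω => huniq _ (hθhatmem N ω) (hh0 _)
    have part2 : ∀ᵐ ω ∂P, Tendsto (fun N => θhat N ω) atTop (𝓝 θ₀) := by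
      refine Filter.Eventually.of_forall fun ω => ?_
      simp only [hθeq]
      exact tendsto_const_nhds
    exact ⟨part1, part2,
      tendstoInMeasure_of_tendsto_ae (fun N => (hθhatmeas N).aestronglyMeasurable) part2⟩
  -- main case
  have hXmeas : ∀ i, Measurable fun ω => g i θ₀ ω :=
    fun i => (hmeas i).comp (measurable_const.prodMk measurable_id)
  have hgbarcont : ∀ (N : ℕ) ω, Continuous fun θ => gbar g N θ ω := by
    intro N ω
    unfold gbar
    exact (continuous_finset_sum _ fun i _ => hcont i ω).const_smul ((N:ℝ)⁻¹)
  have hle_sup : ∀ (N : ℕ) ω, ∀ θ ∈ Θ, ‖gbar g N θ ω - h θ‖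
      ≤ ⨆ θ' : Θ, ‖gbar g N (θ' : Fin k → ℝ) ω - h (θ' : Fin k → ℝ)‖ := by
    intro N ω θ hθ
    have hcs : ContinuousOn (fun θ' => ‖gbar g N θ' ω - h θ'‖) Θ :=
      (((hgbarcont N ω).continuousOn).sub hhcont).norm
    have hbdd : BddAbove (Set.range fun θ' : Θ =>
        ‖gbar g N (θ' : Fin k → ℝ) ω - h (θ' : Fin k → ℝ)‖) := by
      have himg := (hΘ.image_of_continuousOn hcs).bddAbove
      have hre : Set.range (fun θ' : Θ =>
          ‖gbar g N (θ' : Fin k → ℝ) ω - h (θ' : Fin k → ℝ)‖)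
          = (fun θ' => ‖gbar g N θ' ω - h θ'‖) '' Θ :=
        (Set.image_eq_range (fun θ' => ‖gbar g N θ' ω - h θ'‖) Θ).symm
      rwa [hre]
    exact le_ciSup hbdd ⟨θ, hθ⟩
  -- a.s. the sample mean at θ₀ tends to 0
  have hgbar0 : ∀ᵐ ω ∂P,
      Tendsto (fun N : ℕ => ‖(N:ℝ)⁻¹ • ∑ i ∈ Finset.range N, g i θ₀ ω‖) atTop (𝓝 0) := by
    filter_upwards [hsup] with ω hω
    have hub : ∀ N : ℕ, ‖(N:ℝ)⁻¹ • ∑ i ∈ Finset.range N, g i θ₀ ω‖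
        ≤ ⨆ θ' : Θ, ‖gbar g N (θ' : Fin k → ℝ) ω - h (θ' : Fin k → ℝ)‖ := by
      intro N
      have := hle_sup N ω θ₀ hθ₀Θ
      rwa [hzero, sub_zero] at this
    exact tendsto_of_tendsto_of_tendsto_of_le_of_le tendsto_const_nhds hω
      (fun N => norm_nonneg _) hub
  have hcore := qif_core P (fun i ω => g i θ₀ ω) hXmeas
    (fun i j hij => (hindep θ₀).indepFun hij) (fun i => hident θ₀ i) hgbar0
  have part2 : ∀ᵐ ω ∂P, Tendsto (fun N => θhat N ω) atTop (𝓝 θ₀) := by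
    filter_upwards [hsup, hCbar, hcore] with ω hsupω hCω hQ0ω
    -- symmetry of the limit matrix
    have hCbar_symm : ∀ (N : ℕ) θ a b, Cbar g N θ ω a b = Cbar g N θ ω b a := by
      intro N θ a b
      unfold Cbar
      simp only [Matrix.smul_apply, Matrix.sum_apply, vecMulVec_apply, smul_eq_mul]
      congr 1
      exact Finset.sum_congr rfl fun i _ => by ring
    have hCsym : ∀ a b, C₀ a b = C₀ b a := by
      intro a b
      refine tendsto_nhds_unique (hCω a b) ?_
      have heq : (fun N => Cbar g N (θhat N ω) ω b a)
          = fun N => Cbar g N (θhat N ω) ω a b :=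
        funext fun N => (hCbar_symm N (θhat N ω) a b).symm
      rw [← heq]
      exact hCω b a
    -- quadratic-form identities for Cbar
    have hCquadN : ∀ (N : ℕ) θ (v : Fin r → ℝ), v ⬝ᵥ (Cbar g N θ ω).mulVec v
        = (N:ℝ)⁻¹ * ∑ i ∈ Finset.range N, (g i θ ω ⬝ᵥ v)^2 := by
      intro N θ v
      unfold Cbar
      exact quadform_smul_sum _ _ _ _
    have hCquad_nn : ∀ (N : ℕ) θ (v : Fin r → ℝ), 0 ≤ v ⬝ᵥ (Cbar g N θ ω).mulVec v := by
      intro N θ v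
      rw [hCquadN]
      positivity
    -- the quadratic form of Cbar(θhat) converges to that of C₀
    have hC₀tendquad : ∀ v : Fin r → ℝ,
        Tendsto (fun N => v ⬝ᵥ (Cbar g N (θhat N ω) ω).mulVec v) atTop
          (𝓝 (v ⬝ᵥ C₀.mulVec v)) := by
      intro v
      simp only [dotProduct, Matrix.mulVec]
      exact tendsto_finset_sum _ fun a _ => tendsto_const_nhds.mul
        (tendsto_finset_sum _ fun b _ => (hCω a b).mul_const _)
    have hC₀nn : ∀ v : Fin r → ℝ, 0 ≤ v ⬝ᵥ C₀.mulVec v := fun v =>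
      ge_of_tendsto (hC₀tendquad v)
        (Filter.Eventually.of_forall fun N => hCquad_nn N (θhat N ω) v)
    -- C₀ is positive definite
    have hC₀pd : ∀ v : Fin r → ℝ, v ≠ 0 → 0 < v ⬝ᵥ C₀.mulVec v := by
      intro v hv
      rcases (hC₀nn v).lt_or_eq with hlt | heq
      · exact hlt
      exfalso
      set u : Fin r → ℝ := C₀.mulVec v with hu
      have hker : u = 0 := by
        by_contra hu0
        have hupos : 0 < u ⬝ᵥ u := by
          rcases (dot_self_nonneg u).lt_or_eq with h1 | h2
          · exact h1
          · exact absurd (dot_self_eq_zero' h2.symm) hu0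
        set tt : ℝ := -((u ⬝ᵥ C₀.mulVec u) + 1) / (2 * (u ⬝ᵥ u)) with htt
        have hval := hC₀nn (u + tt • v)
        have hexp : (u + tt • v) ⬝ᵥ C₀.mulVec (u + tt • v)
            = u ⬝ᵥ C₀.mulVec u + tt * (u ⬝ᵥ C₀.mulVec v) + tt * (v ⬝ᵥ C₀.mulVec u)
              + tt * tt * (v ⬝ᵥ C₀.mulVec v) := by
          rw [add_dotProduct, Matrix.mulVec_add, dotProduct_add,
            dotProduct_add, Matrix.mulVec_smul, dotProduct_smul,
            smul_dotProduct, smul_dotProduct, dotProduct_smul]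
          simp only [smul_eq_mul]
          ring
        have hvu : v ⬝ᵥ C₀.mulVec u = u ⬝ᵥ C₀.mulVec v := dot_mulVec_symm hCsym v u
        have huv : u ⬝ᵥ C₀.mulVec v = u ⬝ᵥ u := by rw [← hu]
        rw [hexp, hvu, huv, ← heq] at hval
        have : u ⬝ᵥ C₀.mulVec u + tt * (u ⬝ᵥ u) + tt * (u ⬝ᵥ u) + tt * tt * 0
            = u ⬝ᵥ C₀.mulVec u - ((u ⬝ᵥ C₀.mulVec u) + 1) := by
          rw [htt]
          field_simp
          ring
        rw [this] at hval
        linarith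
      have hinj := Matrix.mulVec_injective_iff_isUnit.2 ((Matrix.isUnit_iff_isUnit_det _).2 hC₀)
      refine hv (hinj ?_)
      rw [Matrix.mulVec_zero, ← hu, hker]
    obtain ⟨c₀, hc₀pos, hc₀⟩ := posdef_quad_lb hrpos hC₀pd
    -- eventual lower bound for the quadratic form of Cbar(θhat)
    have hquad_ev : ∀ᶠ N : ℕ in atTop, ∀ v : Fin r → ℝ,
        (c₀/2) * (v ⬝ᵥ v) ≤ v ⬝ᵥ (Cbar g N (θhat N ω) ω).mulVec v :=
      quad_lb_of_entry_tendsto hc₀pos (fun a b => hCω a b) hc₀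
    -- eventual Frobenius-type upper bound
    set K : ℝ := (∑ a, ∑ b, (C₀ a b)^2) + 1 with hK
    have hKpos : 0 < K := by
      have : (0:ℝ) ≤ ∑ a, ∑ b, (C₀ a b)^2 := by positivity
      linarith
    have hFrob : Tendsto (fun N => ∑ a, ∑ b, (Cbar g N (θhat N ω) ω a b)^2) atTop
        (𝓝 (∑ a, ∑ b, (C₀ a b)^2)) :=
      tendsto_finset_sum _ fun a _ => tendsto_finset_sum _ fun b _ => (hCω a b).pow 2
    have hFrob_ev : ∀ᶠ N : ℕ in atTop,
        ∑ a, ∑ b, (Cbar g N (θhat N ω) ω a b)^2 ≤ K :=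
      hFrob.eventually (eventually_le_nhds (lt_add_one _))
    set β : ℝ := (c₀/2) / K with hβ
    have hβpos : 0 < β := by positivity
    -- the penalty of D is nonnegative
    have hDnn : ∀ θ : Fin k → ℝ, 0 ≤ θ ⬝ᵥ D.mulVec θ := by
      intro θ
      have := hD.dotProduct_mulVec_nonneg θ
      simpa using this
    -- upper chain tends to zero
    have hq0 : Tendsto (fun N : ℕ =>
        gbar g N θ₀ ω ⬝ᵥ ((Cbar g N θ₀ ω)⁻¹).mulVec (gbar g N θ₀ ω)) atTop (𝓝 0) := hQ0ω
    have hup : Tendsto (fun N : ℕ =>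
        gbar g N θ₀ ω ⬝ᵥ ((Cbar g N θ₀ ω)⁻¹).mulVec (gbar g N θ₀ ω)
          + lam N * (θ₀ ⬝ᵥ D.mulVec θ₀)) atTop (𝓝 0) := by
      have h2 := hq0.add (hlam.mul_const (θ₀ ⬝ᵥ D.mulVec θ₀))
      simpa using h2
    -- squeeze : the sample mean at θhat tends to 0 (squared norm)
    have hpen_eq : ∀ N : ℕ, 1 ≤ N → ∀ θ, penObj g D lam N θ ω
        = (gbar g N θ ω ⬝ᵥ ((Cbar g N θ ω)⁻¹).mulVec (gbar g N θ ω))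
          + lam N * (θ ⬝ᵥ D.mulVec θ) := by
      intro N hN θ
      unfold penObj QN
      rw [← mul_assoc, inv_mul_cancel₀ (by exact_mod_cast Nat.one_le_iff_ne_zero.1 hN), one_mul]
    have hgdot : Tendsto (fun N : ℕ =>
        gbar g N (θhat N ω) ω ⬝ᵥ gbar g N (θhat N ω) ω) atTop (𝓝 0) := by
      have hupper : Tendsto (fun N : ℕ => β⁻¹ *
          (gbar g N θ₀ ω ⬝ᵥ ((Cbar g N θ₀ ω)⁻¹).mulVec (gbar g N θ₀ ω)
            + lam N * (θ₀ ⬝ᵥ D.mulVec θ₀))) atTop (𝓝 0) := by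
        have h2 := hup.const_mul β⁻¹
        simpa using h2
      refine tendsto_of_tendsto_of_tendsto_of_le_of_le' tendsto_const_nhds hupper
        (Filter.Eventually.of_forall fun N => dot_self_nonneg _) ?_
      filter_upwards [hquad_ev, hFrob_ev, Filter.eventually_ge_atTop 1] with N hN1 hN2 hN3
      -- operator norm bound
      have hop : ∀ v : Fin r → ℝ,
          ((Cbar g N (θhat N ω) ω).mulVec v) ⬝ᵥ ((Cbar g N (θhat N ω) ω).mulVec v)
            ≤ K * (v ⬝ᵥ v) := by
        intro v
        refine (mulVec_dot_le _ v).trans ?_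
        exact mul_le_mul_of_nonneg_right hN2 (dot_self_nonneg v)
      have hlow := inv_quadform_ge (by positivity) hKpos hN1 hop
        (gbar g N (θhat N ω) ω)
      have hmin := hθhatmin N ω θ₀ hθ₀Θ
      rw [hpen_eq N hN3 (θhat N ω), hpen_eq N hN3 θ₀] at hmin
      have hpenterm : 0 ≤ lam N * (θhat N ω ⬝ᵥ D.mulVec (θhat N ω)) :=
        mul_nonneg (hlamnn N) (hDnn _)
      have hchain : β * (gbar g N (θhat N ω) ω ⬝ᵥ gbar g N (θhat N ω) ω)
          ≤ gbar g N θ₀ ω ⬝ᵥ ((Cbar g N θ₀ ω)⁻¹).mulVec (gbar g N θ₀ ω)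
            + lam N * (θ₀ ⬝ᵥ D.mulVec θ₀) := by
        calc β * (gbar g N (θhat N ω) ω ⬝ᵥ gbar g N (θhat N ω) ω)
            ≤ gbar g N (θhat N ω) ω ⬝ᵥ
              ((Cbar g N (θhat N ω) ω)⁻¹).mulVec (gbar g N (θhat N ω) ω) := hlow
          _ ≤ gbar g N (θhat N ω) ω ⬝ᵥ
              ((Cbar g N (θhat N ω) ω)⁻¹).mulVec (gbar g N (θhat N ω) ω)
              + lam N * (θhat N ω ⬝ᵥ D.mulVec (θhat N ω)) := by linarith
          _ ≤ _ := hmin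
      calc gbar g N (θhat N ω) ω ⬝ᵥ gbar g N (θhat N ω) ω
          = β⁻¹ * (β * (gbar g N (θhat N ω) ω ⬝ᵥ gbar g N (θhat N ω) ω)) := by
            field_simp
        _ ≤ β⁻¹ * (gbar g N θ₀ ω ⬝ᵥ ((Cbar g N θ₀ ω)⁻¹).mulVec (gbar g N θ₀ ω)
            + lam N * (θ₀ ⬝ᵥ D.mulVec θ₀)) :=
            mul_le_mul_of_nonneg_left hchain (by positivity)
    -- conclude convergence of θhat to θ₀
    have key : ∀ ε : ℝ, 0 < ε → ∀ᶠ N : ℕ in atTop, dist (θhat N ω) θ₀ < ε := by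
      intro ε hε
      set Kc : Set (Fin k → ℝ) := Θ \ Metric.ball θ₀ ε with hKc
      have hKcomp : IsCompact Kc := hΘ.diff Metric.isOpen_ball
      rcases Kc.eq_empty_or_nonempty with hempty | hne
      · refine Filter.Eventually.of_forall fun N => ?_
        by_contra hnot
        exact Set.eq_empty_iff_forall_notMem.1 hempty (θhat N ω)
          ⟨hθhatmem N ω, fun hball => hnot (Metric.mem_ball.1 hball)⟩
      · obtain ⟨θm, hθmK, hθm⟩ := hKcomp.exists_isMinOn hne
          ((hhcont.mono Set.diff_subset).norm)
        set δ : ℝ := ‖h θm‖ with hδ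
        have hδpos : 0 < δ := by
          rcases (norm_nonneg (h θm)).lt_or_eq with h1 | h2
          · exact h1
          exfalso
          have hzero' : h θm = 0 := norm_eq_zero.1 h2.symm
          have : θm = θ₀ := huniq θm hθmK.1 hzero'
          exact hθmK.2 (this ▸ Metric.mem_ball_self hε)
        have hhn : ∀ᶠ N : ℕ in atTop, ‖h (θhat N ω)‖ < δ := by
          have h1 : ∀ᶠ N : ℕ in atTop,
              (⨆ θ' : Θ, ‖gbar g N (θ' : Fin k → ℝ) ω - h (θ' : Fin k → ℝ)‖) < δ/2 :=
            hsupω.eventually (gt_mem_nhds (by positivity))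
          have h2 : ∀ᶠ N : ℕ in atTop,
              gbar g N (θhat N ω) ω ⬝ᵥ gbar g N (θhat N ω) ω < (δ/2)^2 :=
            hgdot.eventually (gt_mem_nhds (by positivity))
          filter_upwards [h1, h2] with N hN1 hN2
          have hb := hle_sup N ω _ (hθhatmem N ω)
          have hgn : ‖gbar g N (θhat N ω) ω‖ < δ/2 := by
            have hns := norm_sq_le_dot (gbar g N (θhat N ω) ω)
            nlinarith [norm_nonneg (gbar g N (θhat N ω) ω)]
          calc ‖h (θhat N ω)‖
              = ‖gbar g N (θhat N ω) ω - (gbar g N (θhat N ω) ω - h (θhat N ω))‖ := by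
                congr 1
                abel
            _ ≤ ‖gbar g N (θhat N ω) ω‖ + ‖gbar g N (θhat N ω) ω - h (θhat N ω)‖ :=
                norm_sub_le _ _
            _ < δ/2 + δ/2 := by
                refine add_lt_add_of_lt_of_le hgn ?_
                exact le_trans hb (le_of_lt hN1)
            _ = δ := by ring
        filter_upwards [hhn] with N hN
        by_contra hnot
        have hKmem : θhat N ω ∈ Kc :=
          ⟨hθhatmem N ω, fun hball => hnot (Metric.mem_ball.1 hball)⟩
        exact absurd hN (not_lt.2 (hθm hKmem))
    rw [Metric.tendsto_atTop]
    intro ε hε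
    obtain ⟨N₀, hN₀⟩ := Filter.eventually_atTop.1 (key ε hε)
    exact ⟨N₀, hN₀⟩
  exact ⟨part1, part2,
    tendstoInMeasure_of_tendsto_ae (fun N => (hθhatmeas N).aestronglyMeasurable) part2⟩
end

section
/- Under the penalized QIF setup, let θ₀ ∈ Θ and assume E‖g₁(θ₀)‖ < ∞, E[g₁(θ₀)] = 0, C̄_N(θ₀) → C₀ almost surely with C₀ invertible, and λ_N → 0. Suppose for every θ ∈ Θ the matrix C̄_N(θ) is positive semidefinite (which holds by construction), so that N⁻¹Q_N(θ) ≥ 0 and θᵀDθ ≥ 0. Then, since θ̂_N minimizes the penalized objective, the inequality N⁻¹Q_N(θ̂_N) + λ_N θ̂_Nᵀ D θ̂_N ≤ N⁻¹Q_N(θ₀) + λ_N θ₀ᵀ D θ₀ implies N⁻¹ Q_N(θ̂_N) = ḡ_N(θ̂_N)ᵀ C̄_N(θ̂_N)⁻¹ ḡ_N(θ̂_N) → 0 almost surely as N → ∞. -/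
open MeasureTheory ProbabilityTheory Filter Matrix Topology

/-- A real PSD quadratic form is nonnegative. -/
lemma psd_qf_nonneg {n : ℕ} {A : Matrix (Fin n) (Fin n) ℝ} (hA : A.PosSemidef)
    (v : Fin n → ℝ) : 0 ≤ v ⬝ᵥ A.mulVec v := by
  simpa using hA.dotProduct_mulVec_nonneg v

/-- Quadratic form with the (junk-value) inverse of a PSD matrix is nonnegative. -/
lemma psd_inv_qf_nonneg {n : ℕ} {A : Matrix (Fin n) (Fin n) ℝ} (hA : A.PosSemidef)
    (v : Fin n → ℝ) : 0 ≤ v ⬝ᵥ A⁻¹.mulVec v := by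
  by_cases h : IsUnit A.det
  · have hv : A.mulVec (A⁻¹.mulVec v) = v := by
      rw [mulVec_mulVec, Matrix.mul_nonsing_inv A h, Matrix.one_mulVec]
    calc v ⬝ᵥ A⁻¹.mulVec v = (A.mulVec (A⁻¹.mulVec v)) ⬝ᵥ (A⁻¹.mulVec v) := by rw [hv]
      _ = (A⁻¹.mulVec v) ⬝ᵥ A.mulVec (A⁻¹.mulVec v) := dotProduct_comm _ _
      _ ≥ 0 := psd_qf_nonneg hA _
  · rw [Matrix.nonsing_inv_apply_not_isUnit A h]
    simp

/-- The quadratic form map is jointly continuous. -/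
lemma continuous_qf {n : ℕ} :
    Continuous (fun p : (Fin n → ℝ) × Matrix (Fin n) (Fin n) ℝ => p.1 ⬝ᵥ p.2.mulVec p.1) := by
  simp only [dotProduct, mulVec]
  refine continuous_finset_sum _ fun i _ => Continuous.mul ?_ ?_
  · exact (continuous_apply i).comp continuous_fst
  · exact continuous_finset_sum _ fun j _ => Continuous.mul
      ((continuous_apply j).comp ((continuous_apply i).comp continuous_snd))
      ((continuous_apply j).comp continuous_fst)

/-- Under the penalized QIF setup with `E‖g₁(θ₀)‖ < ∞`, `E[g₁(θ₀)] = 0`,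
`C̄_N(θ₀) → C₀` a.s. (C₀ invertible), `λ_N → 0`, and `C̄_N(θ)` positive semidefinite for all
θ, since `θ̂_N` minimizes the penalized objective, the basic inequality
`N⁻¹Q_N(θ̂_N) + λ_N θ̂ᵀDθ̂ ≤ N⁻¹Q_N(θ₀) + λ_N θ₀ᵀDθ₀` yields
`N⁻¹ Q_N(θ̂_N) = ḡ_N(θ̂_N)ᵀ C̄_N(θ̂_N)⁻¹ ḡ_N(θ̂_N) → 0` almost surely. -/
theorem stmt4 {k r : ℕ} {Ω : Type*} [MeasurableSpace Ω]
    (P : Measure Ω) [IsProbabilityMeasure P]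
    (Θ : Set (Fin k → ℝ)) (hΘ : IsCompact Θ)
    (g : ℕ → (Fin k → ℝ) → Ω → Fin r → ℝ)
    (hmeas : ∀ i, Measurable fun p : (Fin k → ℝ) × Ω => g i p.1 p.2)
    (hcont : ∀ i ω, Continuous fun θ => g i θ ω)
    (hindep : ∀ θ, iIndepFun (fun i ω => g i θ ω) P)
    (hident : ∀ θ i, IdentDistrib (g i θ) (g 0 θ) P P)
    (D : Matrix (Fin k) (Fin k) ℝ) (hD : D.PosSemidef)
    (lam : ℕ → ℝ) (hlamnn : ∀ N, 0 ≤ lam N)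
    (θhat : ℕ → Ω → Fin k → ℝ)
    (hθhatmeas : ∀ N, Measurable (θhat N))
    (hθhatmem : ∀ N ω, θhat N ω ∈ Θ)
    (hθhatmin : ∀ N ω, ∀ θ ∈ Θ, penObj g D lam N (θhat N ω) ω ≤ penObj g D lam N θ ω)
    (θ₀ : Fin k → ℝ) (hθ₀ : θ₀ ∈ Θ)
    (hint : Integrable (g 0 θ₀) P)
    (hmean : (∫ ω, g 0 θ₀ ω ∂P) = 0)
    (C₀ : Matrix (Fin r) (Fin r) ℝ) (hC₀ : IsUnit C₀.det)
    (hCbar : ∀ᵐ ω ∂P, ∀ a b,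
      Tendsto (fun N => Cbar g N θ₀ ω a b) atTop (𝓝 (C₀ a b)))
    (hlam : Tendsto lam atTop (𝓝 0))
    (hPSD : ∀ N θ ω, (Cbar g N θ ω).PosSemidef) :
    ∀ᵐ ω ∂P, Tendsto
      (fun N => gbar g N (θhat N ω) ω ⬝ᵥ
        (Cbar g N (θhat N ω) ω)⁻¹.mulVec (gbar g N (θhat N ω) ω))
      atTop (𝓝 0) := by
  -- Strong law of large numbers at θ₀
  have hpind : Pairwise (Function.onFun (fun X Y => IndepFun X Y P) fun i => g i θ₀) :=
    fun i j hij => (hindep θ₀).indepFun hij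
  have hSLLN := ProbabilityTheory.strong_law_ae (fun i => g i θ₀) hint hpind (hident θ₀)
  filter_upwards [hSLLN, hCbar] with ω hg hC
  -- gbar at θ₀ tends to 0
  have hv : Tendsto (fun N => gbar g N θ₀ ω) atTop (𝓝 0) := by
    have : (P[fun ω => g 0 θ₀ ω]) = (0 : Fin r → ℝ) := hmean
    simpa [gbar, this] using hg
  -- Cbar at θ₀ tends to C₀
  have hM : Tendsto (fun N => Cbar g N θ₀ ω) atTop (𝓝 C₀) := by
    refine tendsto_pi_nhds.mpr ?_
    intro a
    rw [tendsto_pi_nhds]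
    intro b
    exact hC a b
  -- inverse tends to C₀⁻¹
  have hRinv : ContinuousAt (Ring.inverse : ℝ → ℝ) C₀.det := by
    rw [Ring.inverse_eq_inv']
    exact continuousAt_inv₀ (by simpa [isUnit_iff_ne_zero] using hC₀)
  have hMinv : Tendsto (fun N => (Cbar g N θ₀ ω)⁻¹) atTop (𝓝 C₀⁻¹) :=
    (continuousAt_matrix_inv C₀ hRinv).tendsto.comp hM
  -- quadratic form at θ₀ tends to 0
  have hqf0 : Tendsto
      (fun N => gbar g N θ₀ ω ⬝ᵥ (Cbar g N θ₀ ω)⁻¹.mulVec (gbar g N θ₀ ω))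
      atTop (𝓝 0) := by
    have := (continuous_qf.tendsto ((0 : Fin r → ℝ), C₀⁻¹)).comp (hv.prodMk_nhds hMinv)
    simpa [Function.comp_def] using this
  -- the upper bound tends to 0
  have hupper : Tendsto
      (fun N => gbar g N θ₀ ω ⬝ᵥ (Cbar g N θ₀ ω)⁻¹.mulVec (gbar g N θ₀ ω)
        + lam N * (θ₀ ⬝ᵥ D.mulVec θ₀)) atTop (𝓝 0) := by
    have := hqf0.add (hlam.mul_const (θ₀ ⬝ᵥ D.mulVec θ₀))
    simpa using this
  -- squeeze
  refine tendsto_of_tendsto_of_tendsto_of_le_of_le' tendsto_const_nhds hupper ?_ ?_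
  · exact Eventually.of_forall fun N => psd_inv_qf_nonneg (hPSD N (θhat N ω) ω) _
  · filter_upwards [eventually_ge_atTop 1] with N hN
    have hNne : (N : ℝ) ≠ 0 := Nat.cast_ne_zero.mpr (by omega)
    have h1 := hθhatmin N ω θ₀ hθ₀
    simp only [penObj, QN, inv_mul_cancel_left₀ hNne] at h1
    have h2 : 0 ≤ lam N * (θhat N ω ⬝ᵥ D.mulVec (θhat N ω)) :=
      mul_nonneg (hlamnn N) (psd_qf_nonneg hD _)
    linarith
end

section
/- Under the penalized QIF setup, let θ₀ ∈ Θ with E‖g₁(θ₀)‖ < ∞ and E[g₁(θ₀)] = 0, let h(θ) = E[g₁(θ)] be continuous on Θ, and assume: (i) sup_{θ∈Θ} ‖ḡ_N(θ) − h(θ)‖ → 0 almost surely; (ii) C̄_N(θ₀) → C₀ and C̄_N(θ̂_N) → C₀ almost surely, where C₀ is a constant invertible r×r matrix; (iii) λ_N → 0. Then h(θ̂_N)ᵀ C₀⁻¹ h(θ̂_N) → 0 almost surely as N → ∞. -/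
open MeasureTheory ProbabilityTheory Filter Matrix Topology

lemma aux_quadBound {r : ℕ} (x y : Fin r → ℝ) (M : Matrix (Fin r) (Fin r) ℝ) :
    |x ⬝ᵥ M.mulVec y| ≤ ‖x‖ * (∑ a, ∑ b, |M a b|) * ‖y‖ := by
  calc |x ⬝ᵥ M.mulVec y| = |∑ a, x a * ∑ b, M a b * y b| := by
        simp [dotProduct, Matrix.mulVec]
    _ ≤ ∑ a, |x a * ∑ b, M a b * y b| := Finset.abs_sum_le_sum_abs _ _
    _ ≤ ∑ a, ∑ b, |x a| * (|M a b| * |y b|) := by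
        refine Finset.sum_le_sum fun a _ => ?_
        rw [abs_mul]
        calc |x a| * |∑ b, M a b * y b| ≤ |x a| * ∑ b, |M a b * y b| :=
              mul_le_mul_of_nonneg_left (Finset.abs_sum_le_sum_abs _ _) (abs_nonneg _)
          _ = ∑ b, |x a| * (|M a b| * |y b|) := by rw [Finset.mul_sum]; simp [abs_mul]
    _ ≤ ∑ a, ∑ b, ‖x‖ * (|M a b| * ‖y‖) := by
        refine Finset.sum_le_sum fun a _ => Finset.sum_le_sum fun b _ => ?_
        have hx : |x a| ≤ ‖x‖ := by simpa [Real.norm_eq_abs] using norm_le_pi_norm x a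
        have hy : |y b| ≤ ‖y‖ := by simpa [Real.norm_eq_abs] using norm_le_pi_norm y b
        gcongr
    _ = ‖x‖ * (∑ a, ∑ b, |M a b|) * ‖y‖ := by
        simp only [← Finset.mul_sum, ← Finset.sum_mul]
        ring

lemma aux_key {r : ℕ} (x y : Fin r → ℝ) (A B : Matrix (Fin r) (Fin r) ℝ) :
    y ⬝ᵥ B.mulVec y = x ⬝ᵥ A.mulVec x - x ⬝ᵥ (A - B).mulVec x
      - (y ⬝ᵥ B.mulVec (x - y) + (x - y) ⬝ᵥ B.mulVec y + (x - y) ⬝ᵥ B.mulVec (x - y)) := by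
  simp only [Matrix.sub_mulVec, Matrix.mulVec_sub, dotProduct_sub,
    sub_dotProduct]
  ring

lemma aux_cbar_psd {k r : ℕ} {Ω : Type*} (g : ℕ → (Fin k → ℝ) → Ω → Fin r → ℝ)
    (N : ℕ) (θ : Fin k → ℝ) (ω : Ω) (x : Fin r → ℝ) :
    0 ≤ x ⬝ᵥ (Cbar g N θ ω).mulVec x := by
  have : x ⬝ᵥ (Cbar g N θ ω).mulVec x
      = (N : ℝ)⁻¹ * ∑ i ∈ Finset.range N, (g i θ ω ⬝ᵥ x) ^ 2 := by
    have hR : ∀ i, (g i θ ω ⬝ᵥ x) ^ 2 = ∑ a, ∑ b, x a * (g i θ ω a * g i θ ω b * x b) := by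
      intro i
      rw [sq, dotProduct, Finset.sum_mul_sum]
      refine Finset.sum_congr rfl fun a _ => Finset.sum_congr rfl fun b _ => by ring
    simp only [hR, Finset.mul_sum]
    rw [Finset.sum_comm]
    refine Finset.sum_congr rfl fun a _ => ?_
    simp only [Cbar, dotProduct, Matrix.mulVec, Matrix.smul_apply, Matrix.sum_apply,
      Matrix.vecMulVec_apply, smul_eq_mul, Finset.mul_sum, Finset.sum_mul]
    rw [Finset.sum_comm]
    refine Finset.sum_congr rfl fun b _ => Finset.sum_congr rfl fun i _ => by ring
  rw [this]
  exact mul_nonneg (inv_nonneg.2 (Nat.cast_nonneg N))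
    (Finset.sum_nonneg fun i _ => sq_nonneg _)

lemma aux_cbar_symm {k r : ℕ} {Ω : Type*} (g : ℕ → (Fin k → ℝ) → Ω → Fin r → ℝ)
    (N : ℕ) (θ : Fin k → ℝ) (ω : Ω) : (Cbar g N θ ω)ᵀ = Cbar g N θ ω := by
  ext a b
  simp only [Cbar, Matrix.transpose_apply, Matrix.smul_apply, Matrix.sum_apply,
    Matrix.vecMulVec_apply, smul_eq_mul]
  rw [Finset.sum_congr rfl fun i _ => mul_comm (g i θ ω b) (g i θ ω a)]

lemma aux_cbarinv_nonneg {k r : ℕ} {Ω : Type*} (g : ℕ → (Fin k → ℝ) → Ω → Fin r → ℝ)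
    (N : ℕ) (θ : Fin k → ℝ) (ω : Ω) (x : Fin r → ℝ) :
    0 ≤ x ⬝ᵥ (Cbar g N θ ω)⁻¹.mulVec x := by
  set A := Cbar g N θ ω with hA
  by_cases hu : IsUnit A.det
  · set y := A⁻¹.mulVec x with hy
    have hx : A.mulVec y = x := by
      rw [hy, Matrix.mulVec_mulVec, Matrix.mul_nonsing_inv _ hu, Matrix.one_mulVec]
    calc (0:ℝ) ≤ y ⬝ᵥ A.mulVec y := aux_cbar_psd g N θ ω y
      _ = (A.mulVec y) ⬝ᵥ y := dotProduct_comm _ _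
      _ = x ⬝ᵥ A⁻¹.mulVec x := by rw [hx]
  · rw [Matrix.nonsing_inv_apply_not_isUnit _ hu]
    simp

lemma aux_inv_tendsto {r : ℕ} (M : ℕ → Matrix (Fin r) (Fin r) ℝ)
    (C : Matrix (Fin r) (Fin r) ℝ) (hC : IsUnit C.det)
    (hM : ∀ a b, Tendsto (fun N => M N a b) atTop (𝓝 (C a b))) :
    ∀ a b, Tendsto (fun N => (M N)⁻¹ a b) atTop (𝓝 (C⁻¹ a b)) := by
  have hMt : Tendsto M atTop (𝓝 C) := by
    exact tendsto_pi_nhds.2 fun a => tendsto_pi_nhds.2 fun b => hM a b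
  have hdet : Tendsto (fun N => (M N).det) atTop (𝓝 C.det) :=
    ((continuous_id.matrix_det).tendsto C).comp hMt
  have hadj : Tendsto (fun N => (M N).adjugate) atTop (𝓝 C.adjugate) :=
    ((continuous_id.matrix_adjugate).tendsto C).comp hMt
  have hdetne : C.det ≠ 0 := by
    intro h0; rw [h0] at hC; simp at hC
  have hinv : Tendsto (fun N => (M N)⁻¹) atTop (𝓝 C⁻¹) := by
    have := (hdet.inv₀ hdetne).smul hadj
    simpa only [Matrix.inv_def, Ring.inverse_eq_inv'] using this
  intro a b
  have := ((continuous_apply b).comp (continuous_apply a)).tendsto C⁻¹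
  exact this.comp hinv

/-- Under the penalized QIF setup, with θ₀ ∈ Θ, `E‖g₁(θ₀)‖ < ∞`,
`E[g₁(θ₀)] = 0`, `h(θ) = E[g₁(θ)]` continuous on Θ, uniform a.s. convergence of ḡ_N to h
over Θ, `C̄_N(θ₀) → C₀` and `C̄_N(θ̂_N) → C₀` a.s. with C₀ constant invertible, and
`λ_N → 0`, it holds that `h(θ̂_N)ᵀ C₀⁻¹ h(θ̂_N) → 0` almost surely. -/
theorem stmt6 {k r : ℕ} {Ω : Type*} [MeasurableSpace Ω]
    (P : Measure Ω) [IsProbabilityMeasure P]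
    (Θ : Set (Fin k → ℝ)) (hΘ : IsCompact Θ)
    (g : ℕ → (Fin k → ℝ) → Ω → Fin r → ℝ)
    (hmeas : ∀ i, Measurable fun p : (Fin k → ℝ) × Ω => g i p.1 p.2)
    (hcont : ∀ i ω, Continuous fun θ => g i θ ω)
    (hindep : ∀ θ, iIndepFun (fun i ω => g i θ ω) P)
    (hident : ∀ θ i, IdentDistrib (g i θ) (g 0 θ) P P)
    (D : Matrix (Fin k) (Fin k) ℝ) (hD : D.PosSemidef)
    (lam : ℕ → ℝ) (hlamnn : ∀ N, 0 ≤ lam N)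
    (θhat : ℕ → Ω → Fin k → ℝ)
    (hθhatmeas : ∀ N, Measurable (θhat N))
    (hθhatmem : ∀ N ω, θhat N ω ∈ Θ)
    (hθhatmin : ∀ N ω, ∀ θ ∈ Θ, penObj g D lam N (θhat N ω) ω ≤ penObj g D lam N θ ω)
    (θ₀ : Fin k → ℝ) (hθ₀ : θ₀ ∈ Θ)
    (hint : Integrable (g 0 θ₀) P)
    (hmean : (∫ ω, g 0 θ₀ ω ∂P) = 0)
    (h : (Fin k → ℝ) → Fin r → ℝ)
    (hh : ∀ θ, h θ = ∫ ω, g 0 θ ω ∂P)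
    (hhcont : ContinuousOn h Θ)
    -- (i)
    (hsup : ∀ᵐ ω ∂P,
      Tendsto (fun N => ⨆ θ : Θ, ‖gbar g N (θ : Fin k → ℝ) ω - h (θ : Fin k → ℝ)‖)
        atTop (𝓝 0))
    -- (ii)
    (C₀ : Matrix (Fin r) (Fin r) ℝ) (hC₀ : IsUnit C₀.det)
    (hCbar0 : ∀ᵐ ω ∂P, ∀ a b,
      Tendsto (fun N => Cbar g N θ₀ ω a b) atTop (𝓝 (C₀ a b)))
    (hCbarhat : ∀ᵐ ω ∂P, ∀ a b,
      Tendsto (fun N => Cbar g N (θhat N ω) ω a b) atTop (𝓝 (C₀ a b)))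
    -- (iii)
    (hlam : Tendsto lam atTop (𝓝 0)) :
    ∀ᵐ ω ∂P, Tendsto
      (fun N => h (θhat N ω) ⬝ᵥ C₀⁻¹.mulVec (h (θhat N ω)))
      atTop (𝓝 0) := by

  classical
  obtain ⟨M₀, hM₀⟩ := hΘ.exists_bound_of_continuousOn hhcont
  have hM₀0 : (0:ℝ) ≤ M₀ := le_trans (norm_nonneg _) (hM₀ θ₀ hθ₀)
  have hhθ₀ : h θ₀ = 0 := by rw [hh]; exact hmean
  set m : ℝ := ∑ a, ∑ b, |C₀⁻¹ a b| with hm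
  have hm0 : 0 ≤ m :=
    Finset.sum_nonneg fun a _ => Finset.sum_nonneg fun b _ => abs_nonneg _
  filter_upwards [hsup, hCbar0, hCbarhat] with ω hsupω hC0ω hChatω
  set u : ℕ → Fin r → ℝ := fun N => gbar g N (θhat N ω) ω with hu
  set y : ℕ → Fin r → ℝ := fun N => h (θhat N ω) with hy
  set d : ℕ → Fin r → ℝ := fun N => u N - y N with hd
  set A : ℕ → Matrix (Fin r) (Fin r) ℝ := fun N => (Cbar g N (θhat N ω) ω)⁻¹ with hA
  set B : ℕ → Matrix (Fin r) (Fin r) ℝ := fun N => (Cbar g N θ₀ ω)⁻¹ with hB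
  set v : ℕ → Fin r → ℝ := fun N => gbar g N θ₀ ω with hv
  set S : ℕ → ℝ :=
    fun N => ⨆ θ : Θ, ‖gbar g N (θ : Fin k → ℝ) ω - h (θ : Fin k → ℝ)‖ with hS
  have hbdd : ∀ N, ∀ θ' ∈ Θ, ‖gbar g N θ' ω - h θ'‖ ≤ S N := by
    intro N θ' hθ'
    have hcΘ : ContinuousOn (fun θ => ‖gbar g N θ ω - h θ‖) Θ := by
      refine ContinuousOn.norm (ContinuousOn.sub ?_ hhcont)
      refine Continuous.continuousOn ?_
      unfold gbar
      exact (continuous_const (y := ((N : ℝ)⁻¹))).smul (continuous_finset_sum _ fun i _ => hcont i ω)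
    have hcomp := (hΘ.image_of_continuousOn hcΘ).bddAbove
    rw [Set.image_eq_range] at hcomp
    exact le_ciSup hcomp (⟨θ', hθ'⟩ : Θ)
  have hd0 : Tendsto (fun N => ‖d N‖) atTop (𝓝 0) :=
    squeeze_zero (fun N => norm_nonneg _)
      (fun N => hbdd N _ (hθhatmem N ω)) hsupω
  have hv0 : Tendsto (fun N => ‖v N‖) atTop (𝓝 0) := by
    refine squeeze_zero (fun N => norm_nonneg _) (fun N => ?_) hsupω
    have := hbdd N θ₀ hθ₀
    simpa [hhθ₀] using this
  have hAinv := aux_inv_tendsto (fun N => Cbar g N (θhat N ω) ω) C₀ hC₀ hChatω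
  have hBinv := aux_inv_tendsto (fun N => Cbar g N θ₀ ω) C₀ hC₀ hC0ω
  have hmA : Tendsto (fun N => ∑ a, ∑ b, |A N a b - C₀⁻¹ a b|) atTop (𝓝 0) := by
    have : Tendsto (fun N => ∑ a, ∑ b, |A N a b - C₀⁻¹ a b|) atTop
        (𝓝 (∑ a : Fin r, ∑ b : Fin r, |C₀⁻¹ a b - C₀⁻¹ a b|)) :=
      tendsto_finset_sum _ fun a _ => tendsto_finset_sum _ fun b _ =>
        ((hAinv a b).sub tendsto_const_nhds).abs
    simpa using this
  have hmB : Tendsto (fun N => ∑ a, ∑ b, |B N a b|) atTop (𝓝 m) := by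
    rw [hm]
    exact tendsto_finset_sum _ fun a _ => tendsto_finset_sum _ fun b _ =>
      (hBinv a b).abs
  set q : ℕ → ℝ := fun N => u N ⬝ᵥ (A N).mulVec (u N) with hq
  have hq0 : Tendsto q atTop (𝓝 0) := by
    have hub : ∀ᶠ N in atTop,
        q N ≤ v N ⬝ᵥ (B N).mulVec (v N) + lam N * (θ₀ ⬝ᵥ D.mulVec θ₀) := by
      filter_upwards [eventually_ge_atTop 1] with N hN
      have hNne : (N:ℝ) ≠ 0 := Nat.cast_ne_zero.2 (by omega)
      have hpen := hθhatmin N ω θ₀ hθ₀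
      have e1 : penObj g D lam N (θhat N ω) ω
          = q N + lam N * (θhat N ω ⬝ᵥ D.mulVec (θhat N ω)) := by
        simp only [penObj, QN, hq, hu, hA]
        rw [inv_mul_cancel_left₀ hNne]
      have e2 : penObj g D lam N θ₀ ω
          = v N ⬝ᵥ (B N).mulVec (v N) + lam N * (θ₀ ⬝ᵥ D.mulVec θ₀) := by
        simp only [penObj, QN, hv, hB]
        rw [inv_mul_cancel_left₀ hNne]
      rw [e1, e2] at hpen
      have hnn : 0 ≤ lam N * (θhat N ω ⬝ᵥ D.mulVec (θhat N ω)) := by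
        refine mul_nonneg (hlamnn N) ?_
        have := hD.dotProduct_mulVec_nonneg (θhat N ω)
        simpa using this
      linarith
    have hlb : ∀ N, 0 ≤ q N := fun N =>
      aux_cbarinv_nonneg g N (θhat N ω) ω (u N)
    have h1 : Tendsto (fun N => v N ⬝ᵥ (B N).mulVec (v N)) atTop (𝓝 0) := by
      refine squeeze_zero_norm' (a := fun N => ‖v N‖ * (m + 1) * ‖v N‖) ?_ ?_
      · filter_upwards [hmB.eventually (eventually_le_nhds (lt_add_one m))]
          with N hNm
        calc ‖v N ⬝ᵥ (B N).mulVec (v N)‖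
            ≤ ‖v N‖ * (∑ a, ∑ b, |B N a b|) * ‖v N‖ := by
              rw [Real.norm_eq_abs]; exact aux_quadBound _ _ _
          _ ≤ ‖v N‖ * (m + 1) * ‖v N‖ := by gcongr
      · have := (hv0.mul_const (m + 1)).mul hv0
        simpa using this
    have h2 : Tendsto (fun N => lam N * (θ₀ ⬝ᵥ D.mulVec θ₀)) atTop (𝓝 0) := by
      simpa using hlam.mul_const (θ₀ ⬝ᵥ D.mulVec θ₀)
    have hrhs := h1.add h2
    rw [add_zero] at hrhs
    exact tendsto_of_tendsto_of_tendsto_of_le_of_le' tendsto_const_nhds hrhs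
      (Eventually.of_forall hlb) hub
  have hyb : ∀ N, ‖y N‖ ≤ M₀ := fun N => hM₀ _ (hθhatmem N ω)
  have hub' : ∀ᶠ N in atTop, ‖u N‖ ≤ M₀ + 1 := by
    filter_upwards [hd0.eventually (eventually_le_nhds one_pos)] with N h1
    have huy : u N = y N + d N := by rw [hd]; ring
    calc ‖u N‖ = ‖y N + d N‖ := by rw [huy]
      _ ≤ ‖y N‖ + ‖d N‖ := norm_add_le _ _
      _ ≤ M₀ + 1 := add_le_add (hyb N) h1
  have ht1 : Tendsto (fun N => u N ⬝ᵥ (A N - C₀⁻¹).mulVec (u N)) atTop (𝓝 0) := by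
    refine squeeze_zero_norm'
      (a := fun N => (M₀ + 1) * (∑ a, ∑ b, |A N a b - C₀⁻¹ a b|) * (M₀ + 1)) ?_ ?_
    · filter_upwards [hub'] with N hN
      calc ‖u N ⬝ᵥ (A N - C₀⁻¹).mulVec (u N)‖
          ≤ ‖u N‖ * (∑ a, ∑ b, |(A N - C₀⁻¹) a b|) * ‖u N‖ := by
            rw [Real.norm_eq_abs]; exact aux_quadBound _ _ _
        _ = ‖u N‖ * (∑ a, ∑ b, |A N a b - C₀⁻¹ a b|) * ‖u N‖ := by
            simp [Matrix.sub_apply]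
        _ ≤ (M₀ + 1) * (∑ a, ∑ b, |A N a b - C₀⁻¹ a b|) * (M₀ + 1) := by
            gcongr
    · have := (hmA.const_mul (M₀ + 1)).mul_const (M₀ + 1)
      simpa using this
  have ht2 : Tendsto (fun N => y N ⬝ᵥ C₀⁻¹.mulVec (d N)) atTop (𝓝 0) := by
    refine squeeze_zero_norm' (a := fun N => M₀ * m * ‖d N‖) ?_ ?_
    · refine Eventually.of_forall fun N => ?_
      calc ‖y N ⬝ᵥ C₀⁻¹.mulVec (d N)‖
          ≤ ‖y N‖ * m * ‖d N‖ := by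
            rw [Real.norm_eq_abs]; exact aux_quadBound _ _ _
        _ ≤ M₀ * m * ‖d N‖ := by gcongr; exact hyb N
    · have := hd0.const_mul (M₀ * m)
      simp only [mul_zero] at this
      refine this.congr fun N => by ring
  have ht3 : Tendsto (fun N => d N ⬝ᵥ C₀⁻¹.mulVec (y N)) atTop (𝓝 0) := by
    refine squeeze_zero_norm' (a := fun N => ‖d N‖ * m * M₀) ?_ ?_
    · refine Eventually.of_forall fun N => ?_
      calc ‖d N ⬝ᵥ C₀⁻¹.mulVec (y N)‖
          ≤ ‖d N‖ * m * ‖y N‖ := by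
            rw [Real.norm_eq_abs]; exact aux_quadBound _ _ _
        _ ≤ ‖d N‖ * m * M₀ := by gcongr; exact hyb N
    · have := (hd0.mul_const m).mul_const M₀
      simpa using this
  have ht4 : Tendsto (fun N => d N ⬝ᵥ C₀⁻¹.mulVec (d N)) atTop (𝓝 0) := by
    refine squeeze_zero_norm' (a := fun N => ‖d N‖ * m * ‖d N‖) ?_ ?_
    · exact Eventually.of_forall fun N => by
        rw [Real.norm_eq_abs]; exact aux_quadBound _ _ _
    · have := (hd0.mul_const m).mul hd0
      simpa using this
  have hkey : ∀ N, y N ⬝ᵥ C₀⁻¹.mulVec (y N)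
      = q N - u N ⬝ᵥ (A N - C₀⁻¹).mulVec (u N)
        - (y N ⬝ᵥ C₀⁻¹.mulVec (d N) + d N ⬝ᵥ C₀⁻¹.mulVec (y N)
          + d N ⬝ᵥ C₀⁻¹.mulVec (d N)) := by
    intro N
    have := aux_key (u N) (y N) (A N) C₀⁻¹
    rw [hd]
    exact this
  have hfin : Tendsto (fun N => y N ⬝ᵥ C₀⁻¹.mulVec (y N)) atTop (𝓝 0) := by
    have := (hq0.sub ht1).sub ((ht2.add ht3).add ht4)
    simp only [sub_zero, add_zero, zero_add, sub_self] at this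
    exact Tendsto.congr (fun N => (hkey N).symm) this
  exact hfin
end
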